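/- Let H be a Hilbert space, (P_M)_{M∈ℳ} a nested family of closed subspaces indexed by a subset ℳ of ℕ (with P_M ⊆ P_{M'} when M ≤ M'), f* ∈ H with orthogonal projections f*^(M) onto P_M, and estimators f̂^(M) ∈ P_M for each M ∈ ℳ. Let σ : ℳ → ℝ≥0 be nondecreasing and suppose ‖f̂^(M) − f*^(M)‖ ≤ σ(M)/2 for all M ∈ ℳ. Define A(M) = sup_{M'∈ℳ} ( ‖f̂^(M')−f̂^(M∧M')‖ − σ(M') ) and let M̂ minimize A(M)+2σ(M) over ℳ. Then ‖f̂^(M̂) − f*‖ ≤ 4 inf_{M∈ℳ} ( ‖f*^(M) − f*‖ + σ(M) ). -/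

import Mathlib

open scoped RealInnerProductSpace

lemma proj_diff_le_aux {H : Type*} [NormedAddCommGroup H] [InnerProductSpace ℝ H]
    (K₁ K₂ : Submodule ℝ H) [Submodule.HasOrthogonalProjection K₁] [Submodule.HasOrthogonalProjection K₂]
    (h : K₁ ≤ K₂) (f : H) :
    ‖(Submodule.orthogonalProjectionOnto K₂ f : H) - (Submodule.orthogonalProjectionOnto K₁ f : H)‖
      ≤ ‖f - (Submodule.orthogonalProjectionOnto K₁ f : H)‖ := by
  set w : H := (Submodule.orthogonalProjectionOnto K₁ f : H) with hw
  have hwK₂ : w ∈ K₂ := h (Submodule.orthogonalProjectionOnto K₁ f).2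
  have hproj : (Submodule.orthogonalProjectionOnto K₂ (f - w) : H)
      = (Submodule.orthogonalProjectionOnto K₂ f : H) - w := by
    rw [map_sub]
    simp [show (K₂.orthogonalProjectionOnto w : H) = w from (K₂.starProjection_apply w).symm.trans (K₂.starProjection_eq_self_iff.2 hwK₂)]
  calc ‖(Submodule.orthogonalProjectionOnto K₂ f : H) - w‖
      = ‖(Submodule.orthogonalProjectionOnto K₂ (f - w) : H)‖ := by rw [hproj]
    _ ≤ ‖Submodule.orthogonalProjectionOnto K₂‖ * ‖f - w‖ := by
        simpa using (Submodule.orthogonalProjectionOnto K₂).le_opNorm (f - w)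
    _ ≤ 1 * ‖f - w‖ := by
        exact mul_le_mul_of_nonneg_right (Submodule.orthogonalProjectionOnto_norm_le K₂) (norm_nonneg _)
    _ = ‖f - w‖ := one_mul _

theorem stmt0 {H : Type*} [NormedAddCommGroup H] [InnerProductSpace ℝ H]
    (M' : Finset ℕ) (hM' : M'.Nonempty)
    (P : ℕ → Submodule ℝ H) [∀ m, Submodule.HasOrthogonalProjection (P m)]
    (hnested : ∀ m ∈ M', ∀ m' ∈ M', m ≤ m' → P m ≤ P m')
    (fstar : H) (fhat : ℕ → H) (σ : ℕ → ℝ)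
    (hσnonneg : ∀ m ∈ M', 0 ≤ σ m)
    (hσmono : ∀ m ∈ M', ∀ m' ∈ M', m ≤ m' → σ m ≤ σ m')
    (hmem : ∀ m ∈ M', fhat m ∈ P m)
    (hvar : ∀ m ∈ M', ‖fhat m - (Submodule.orthogonalProjectionOnto (P m) fstar : H)‖ ≤ σ m / 2)
    (A : ℕ → ℝ)
    (hA : ∀ m, A m = M'.sup' hM' (fun m' => ‖fhat m' - fhat (min m m')‖ - σ m'))
    (Mhat : ℕ) (hMhat : Mhat ∈ M')
    (hmin : ∀ m ∈ M', A Mhat + 2 * σ Mhat ≤ A m + 2 * σ m) :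
    ‖fhat Mhat - fstar‖ ≤
      4 * M'.inf' hM' (fun m => ‖(Submodule.orthogonalProjectionOnto (P m) fstar : H) - fstar‖ + σ m) := by
  set g : ℕ → H := fun k => (Submodule.orthogonalProjectionOnto (P k) fstar : H) with hg
  -- key bound on A
  have hAle : ∀ k ∈ M', A k ≤ ‖g k - fstar‖ := by
    intro k hk
    rw [hA k]
    apply Finset.sup'_le
    intro m' hm'
    have hjmem : min k m' ∈ M' := by
      rcases le_total k m' with h | h
      · simp [min_eq_left h]; exact hk
      · simpa [min_eq_right h] using hm'
    have hjm' : min k m' ≤ m' := min_le_right _ _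
    have hσj : σ (min k m') ≤ σ m' := hσmono _ hjmem _ hm' hjm'
    have hmid : ‖g m' - g (min k m')‖ ≤ ‖g k - fstar‖ := by
      rcases le_total m' k with h | h
      · have : min k m' = m' := min_eq_right h
        rw [this]
        simpa using norm_nonneg (g k - fstar)
      · have hmin' : min k m' = k := min_eq_left h
        rw [hmin']
        have := proj_diff_le_aux (P k) (P m') (hnested _ hk _ hm' h) fstar
        calc ‖g m' - g k‖ ≤ ‖fstar - g k‖ := this
          _ = ‖g k - fstar‖ := norm_sub_rev _ _
    have htri : ‖fhat m' - fhat (min k m')‖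
        ≤ ‖fhat m' - g m'‖ + ‖g m' - g (min k m')‖ + ‖g (min k m') - fhat (min k m')‖ := by
      have := norm_sub_le_norm_sub_add_norm_sub (fhat m') (g (min k m')) (fhat (min k m'))
      have h2 := norm_sub_le_norm_sub_add_norm_sub (fhat m') (g m') (g (min k m'))
      calc ‖fhat m' - fhat (min k m')‖
          ≤ ‖fhat m' - g (min k m')‖ + ‖g (min k m') - fhat (min k m')‖ := this
        _ ≤ ‖fhat m' - g m'‖ + ‖g m' - g (min k m')‖ + ‖g (min k m') - fhat (min k m')‖ := by
            linarith
    have h1 : ‖fhat m' - g m'‖ ≤ σ m' / 2 := hvar _ hm'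
    have h2 : ‖g (min k m') - fhat (min k m')‖ ≤ σ (min k m') / 2 := by
      rw [norm_sub_rev]; exact hvar _ hjmem
    linarith
  -- choose minimizer
  obtain ⟨m, hm, hmeq⟩ := Finset.exists_mem_eq_inf' hM'
    (fun m => ‖(Submodule.orthogonalProjectionOnto (P m) fstar : H) - fstar‖ + σ m)
  rw [hmeq]
  -- bounds
  have hT1 : ‖fhat Mhat - fhat (min m Mhat)‖ ≤ A m + σ Mhat := by
    have := Finset.le_sup' (fun m' => ‖fhat m' - fhat (min m m')‖ - σ m') hMhat
    rw [hA m]; linarith [this]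
  have hT2 : ‖fhat (min m Mhat) - fhat m‖ ≤ A Mhat + σ m := by
    have := Finset.le_sup' (fun m' => ‖fhat m' - fhat (min Mhat m')‖ - σ m') hm
    rw [hA Mhat]
    have hcomm : min Mhat m = min m Mhat := min_comm _ _
    have : ‖fhat m - fhat (min Mhat m)‖ - σ m
        ≤ M'.sup' hM' fun m' => ‖fhat m' - fhat (min Mhat m')‖ - σ m' := this
    rw [hcomm, norm_sub_rev] at this
    linarith
  have hT3 : ‖fhat m - g m‖ ≤ σ m / 2 := hvar _ hm
  have hchain : ‖fhat Mhat - fstar‖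
      ≤ ‖fhat Mhat - fhat (min m Mhat)‖ + ‖fhat (min m Mhat) - fhat m‖
        + ‖fhat m - g m‖ + ‖g m - fstar‖ := by
    have a1 := norm_sub_le_norm_sub_add_norm_sub (fhat Mhat) (g m) fstar
    have a2 := norm_sub_le_norm_sub_add_norm_sub (fhat Mhat) (fhat m) (g m)
    have a3 := norm_sub_le_norm_sub_add_norm_sub (fhat Mhat) (fhat (min m Mhat)) (fhat m)
    linarith
  have hAm : A m ≤ ‖g m - fstar‖ := hAle _ hm
  have hAMhat : A Mhat + 2 * σ Mhat ≤ A m + 2 * σ m := hmin _ hm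
  have hσM : 0 ≤ σ Mhat := hσnonneg _ hMhat
  have hσm : 0 ≤ σ m := hσnonneg _ hm
  have hnn : 0 ≤ ‖g m - fstar‖ := norm_nonneg _
  show ‖fhat Mhat - fstar‖ ≤ 4 * (‖g m - fstar‖ + σ m)
  linarith
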